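/- Consider the Kuramoto model on the Erdős–Rényi graph G(n,p): du_{ni}/dt = ((−1)^α/(np)) Σ_{j=1}^n a_{nij} sin(2π(u_{nj} − u_{ni})), i ∈ [n], with α ∈ {0,1} and p ∈ (0,1). Then for every ε_1, ε_2 ∈ (0,1), every T > 0, and every integer q ≥ 1, there exists N = N(ε_1, ε_2) such that for every n ≥ N one can find δ = δ(n, ε_2) > 0 with the following property: if ‖u_n(0) − u_n^{(q)}‖_{2,n} < δ, then P{ max_{t∈[0,T]} ‖u_n(t) − u_n^{(q)}‖_{2,n} > ε_1 } < ε_2; i.e., twisted states are metastable for the Kuramoto model on large Erdős–Rényi graphs (Theorem 7.4). -/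

import Mathlib

open MeasureTheory

/-- The weighted Euclidean norm `‖w‖_{2,n} = (n⁻¹ ∑ w_i²)^{1/2}` on `ℝ^n`. -/
noncomputable def norm2n (n : ℕ) (w : Fin n → ℝ) : ℝ :=
  Real.sqrt ((n : ℝ)⁻¹ * ∑ i : Fin n, (w i) ^ 2)

namespace TwistedAux

open Real

/-! ### Trigonometric sum lemmas -/

lemma sin_per (n q : ℕ) (hn : 0 < n) (m m' : ℤ) (h : (m : ZMod n) = m') :
    Real.sin (2*π*q*m/n) = Real.sin (2*π*q*m'/n) := by
  have hn' : (n:ℝ) ≠ 0 := by positivity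
  obtain ⟨k, hk⟩ : (n:ℤ) ∣ (m - m') := by
    rwa [← ZMod.intCast_zmod_eq_zero_iff_dvd, Int.cast_sub, sub_eq_zero]
  have hm : m = m' + n * k := by linarith [hk]
  subst hm
  have : 2*π*q*((m':ℝ) + n*k)/n = 2*π*q*m'/n + (q*k) * (2*π) := by
    field_simp
  rw [show ((m' + n*k : ℤ) : ℝ) = (m':ℝ) + n*k by push_cast; ring, this]
  exact_mod_cast Real.sin_add_int_mul_two_pi _ (q*k)

lemma fin_cast_add (n : ℕ) [NeZero n] (a b : Fin n) :
    (((a + b : Fin n) : ℕ) : ZMod n) = ((a:ℕ) : ZMod n) + ((b:ℕ) : ZMod n) := by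
  rw [Fin.val_add, ZMod.natCast_mod, Nat.cast_add]

lemma fin_cast_sub (n : ℕ) [NeZero n] (a b : Fin n) :
    (((a - b : Fin n) : ℕ) : ZMod n) = ((a:ℕ) : ZMod n) - ((b:ℕ) : ZMod n) := by
  rw [Fin.sub_def]
  simp only [ZMod.natCast_mod, Nat.cast_add]
  rw [Nat.cast_sub (le_of_lt b.isLt), ZMod.natCast_self]
  ring

lemma sum_sin_zero (n q : ℕ) (hn : 0 < n) (i : Fin n) :
    ∑ j : Fin n, Real.sin (2*π*q*((((j:ℕ):ℤ) - ((i:ℕ):ℤ) : ℤ) : ℝ)/n) = 0 := by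
  haveI : NeZero n := ⟨hn.ne'⟩
  apply Finset.sum_ninvolution (g := fun j => i + i - j)
  · intro j
    rw [sin_per n q hn ((((i+i-j : Fin n):ℕ):ℤ) - ((i:ℕ):ℤ)) (-(((j:ℕ):ℤ) - ((i:ℕ):ℤ)))
      (by push_cast [fin_cast_sub, fin_cast_add]; ring)]
    rw [show ((-(((j:ℕ):ℤ) - ((i:ℕ):ℤ)) : ℤ):ℝ)
      = -((((j:ℕ):ℤ) - ((i:ℕ):ℤ) : ℤ):ℝ) by push_cast; ring]
    rw [show (2*π*q*(-((((j:ℕ):ℤ) - ((i:ℕ):ℤ) : ℤ):ℝ))/n : ℝ)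
      = -(2*π*q*(((((j:ℕ):ℤ) - ((i:ℕ):ℤ) : ℤ)):ℝ)/n) by ring]
    rw [Real.sin_neg]; ring
  · intro j hj hfix
    exfalso; apply hj
    have h2 : ((2 * (((j:ℕ):ℤ) - ((i:ℕ):ℤ)) : ℤ) : ZMod n) = 0 := by
      have := congrArg (fun x : Fin n => (((x : ℕ) : ZMod n))) hfix
      simp only [fin_cast_sub, fin_cast_add] at this
      push_cast
      linear_combination -this
    obtain ⟨k, hk⟩ := (ZMod.intCast_zmod_eq_zero_iff_dvd _ n).1 h2
    have hne : (n:ℝ) ≠ 0 := by positivity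
    have hkr : (2 * ((((j:ℕ):ℤ):ℝ) - (((i:ℕ):ℤ):ℝ))) = (n:ℝ) * k := by exact_mod_cast hk
    have : (2*π*q*((((j:ℕ):ℤ) - ((i:ℕ):ℤ) : ℤ):ℝ)/n : ℝ) = ((q * k : ℤ):ℝ) * π := by
      push_cast
      push_cast at hkr
      field_simp
      linear_combination (q:ℝ) * hkr
    rw [this, Real.sin_int_mul_pi]
  · intro j; exact Finset.mem_univ _
  · intro j; exact sub_sub_cancel _ _

/-! ### Euclidean space tools -/

noncomputable def toE {n : ℕ} (v : Fin n → ℝ) : EuclideanSpace ℝ (Fin n) :=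
  (EuclideanSpace.equiv (Fin n) ℝ).symm v

lemma toE_apply {n : ℕ} (v : Fin n → ℝ) (i : Fin n) : toE v i = v i := rfl

lemma toE_norm {n : ℕ} (v : Fin n → ℝ) : ‖toE v‖ = Real.sqrt (∑ i, (v i)^2) := by
  rw [EuclideanSpace.norm_eq]
  congr 1
  refine Finset.sum_congr rfl fun i _ => ?_
  rw [toE_apply, Real.norm_eq_abs, sq_abs]

lemma toE_add {n : ℕ} (v w : Fin n → ℝ) : toE (fun i => v i + w i) = toE v + toE w := rfl

lemma norm2n_eq {n : ℕ} (v : Fin n → ℝ) :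
    norm2n n v = (Real.sqrt n)⁻¹ * ‖toE v‖ := by
  rw [toE_norm, norm2n, ← Real.sqrt_inv, ← Real.sqrt_mul (by positivity)]

lemma norm_toE_mono {n : ℕ} (v w : Fin n → ℝ) (h : ∀ i, |v i| ≤ w i) :
    ‖toE v‖ ≤ ‖toE w‖ := by
  rw [toE_norm, toE_norm]
  apply Real.sqrt_le_sqrt
  refine Finset.sum_le_sum fun i _ => ?_
  rw [← sq_abs (v i)]
  have h0 : (0:ℝ) ≤ |v i| := abs_nonneg _
  have := h i
  nlinarith

lemma sin_lip (x y : ℝ) : |Real.sin x - Real.sin y| ≤ |x - y| := by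
  have := Convex.norm_image_sub_le_of_norm_hasDerivWithin_le (f := Real.sin) (f' := Real.cos)
    (fun z _ => (Real.hasDerivAt_sin z).hasDerivWithinAt) (C := 1)
    (fun z _ => by rw [Real.norm_eq_abs]; exact Real.abs_cos_le_one z)
    convex_univ (Set.mem_univ y) (Set.mem_univ x)
  simpa [Real.norm_eq_abs] using this

/-! ### The twisted state and the deterministic Grönwall estimate -/

noncomputable def tw (n q : ℕ) (c : ℝ) : Fin n → ℝ := fun x => ((q * (x:ℕ) : ℕ):ℝ)/n + c

lemma tw_arg (n q : ℕ) (hn : 0 < n) (c : ℝ) (i j : Fin n) :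
    2*π*(tw n q c j - tw n q c i) = 2*π*q*((((j:ℕ):ℤ) - ((i:ℕ):ℤ) : ℤ):ℝ)/n := by
  have hnR : (n:ℝ) ≠ 0 := by positivity
  unfold tw
  push_cast
  field_simp
  ring

lemma gronwall_det (n q : ℕ) (hn : 0 < n) (p c T δ η : ℝ) (hp : 0 < p) (hT : 0 ≤ T)
    (hδ0 : 0 ≤ δ) (hη0 : 0 ≤ η) (α : ℕ)
    (A : Fin n → Fin n → ℝ) (hA0 : ∀ i j, 0 ≤ A i j) (hA1 : ∀ i j, A i j ≤ 1)
    (u : ℝ → Fin n → ℝ)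
    (hu : ∀ (t : ℝ) (i : Fin n), HasDerivAt (fun s => u s i)
       (((-1:ℝ)^α / (n*p)) * ∑ j, A i j * Real.sin (2*π*(u t j - u t i))) t)
    (hB : norm2n n (fun i => ((-1:ℝ)^α/(n*p)) * ∑ j, A i j
        * Real.sin (2*π*(tw n q c j - tw n q c i))) ≤ η)
    (h0 : norm2n n (fun x => u 0 x - tw n q c x) ≤ δ) :
    ∀ t ∈ Set.Icc 0 T, norm2n n (fun x => u t x - tw n q c x)
      ≤ gronwallBound δ (4*π/p) η t := by
  have hnR : (0:ℝ) < n := by exact_mod_cast hn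
  set sn : ℝ := Real.sqrt n with hsn
  have hsn0 : 0 < sn := Real.sqrt_pos.2 hnR
  have hsnsq : sn * sn = n := Real.mul_self_sqrt hnR.le
  set κ : ℝ := ((-1:ℝ)^α / (n*p)) with hκ
  have hκabs : |κ| = 1/(n*p) := by
    rw [hκ, abs_div, abs_pow, abs_neg, abs_one, one_pow]
    rw [abs_of_pos (by positivity : (0:ℝ) < (n:ℝ)*p)]
  set L : (Fin n → ℝ) →L[ℝ] EuclideanSpace ℝ (Fin n) :=
    ((EuclideanSpace.equiv (Fin n) ℝ).symm : (Fin n → ℝ) ≃L[ℝ] EuclideanSpace ℝ (Fin n)).toContinuousLinearMap with hL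
  have hLtoE : ∀ v : Fin n → ℝ, L v = toE v := fun v => rfl
  set f : ℝ → EuclideanSpace ℝ (Fin n) :=
    fun t => (sn⁻¹ : ℝ) • toE (fun x => u t x - tw n q c x) with hf
  set F : ℝ → Fin n → ℝ :=
    fun t i => κ * ∑ j, A i j * Real.sin (2*π*(u t j - u t i)) with hFd
  have hderiv : ∀ t, HasDerivAt f ((sn⁻¹ : ℝ) • toE (F t)) t := by
    intro t
    have h1 : HasDerivAt (fun s => (fun x => u s x - tw n q c x)) (F t) t := by
      rw [hasDerivAt_pi]
      intro i
      simpa using (hu t i).sub_const (tw n q c i)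
    have h2 := (L.hasFDerivAt.comp_hasDerivAt t h1)
    exact (h2.const_smul (sn⁻¹ : ℝ))
  have hnormf : ∀ t, ‖f t‖ = norm2n n (fun x => u t x - tw n q c x) := by
    intro t
    rw [hf]
    simp only [norm_smul, Real.norm_eq_abs, abs_inv, abs_of_pos hsn0]
    rw [norm2n_eq]
  -- the vector field bound
  have key : ∀ t, ‖(sn⁻¹ : ℝ) • toE (F t)‖ ≤ (4*π/p) * ‖f t‖ + η := by
    intro t
    set d : Fin n → ℝ := fun x => u t x - tw n q c x with hd
    set B : Fin n → ℝ := fun i => κ * ∑ j, A i j * Real.sin (2*π*(tw n q c j - tw n q c i)) with hBd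
    set S : ℝ := ∑ j, |d j| with hS
    have hS0 : 0 ≤ S := Finset.sum_nonneg fun j _ => abs_nonneg _
    have pt : ∀ i, |F t i - B i| ≤ (2*π/(n*p)) * S + (2*π/p) * |d i| := by
      intro i
      rw [hFd, hBd]
      simp only
      rw [← mul_sub, ← Finset.sum_sub_distrib]
      rw [abs_mul, hκabs]
      have hsum : |∑ j, (A i j * Real.sin (2*π*(u t j - u t i))
          - A i j * Real.sin (2*π*(tw n q c j - tw n q c i)))|
          ≤ ∑ j, (2*π) * (|d j| + |d i|) := by
        refine (Finset.abs_sum_le_sum_abs _ _).trans (Finset.sum_le_sum fun j _ => ?_)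
        rw [← mul_sub, abs_mul, abs_of_nonneg (hA0 i j)]
        calc A i j * |Real.sin (2*π*(u t j - u t i)) - Real.sin (2*π*(tw n q c j - tw n q c i))|
            ≤ 1 * |2*π*(u t j - u t i) - 2*π*(tw n q c j - tw n q c i)| := by
              apply mul_le_mul (hA1 i j) (sin_lip _ _) (abs_nonneg _) zero_le_one
          _ = (2*π) * |d j - d i| := by
              rw [one_mul, show 2*π*(u t j - u t i) - 2*π*(tw n q c j - tw n q c i)
                = (2*π) * (d j - d i) by rw [hd]; ring, abs_mul]
              congr 1
              rw [abs_of_pos (by positivity : (0:ℝ) < 2*π)]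
          _ ≤ (2*π) * (|d j| + |d i|) := by
              gcongr
              exact (abs_sub _ _)
      calc (1/(n*p)) * |∑ j, (A i j * Real.sin (2*π*(u t j - u t i))
              - A i j * Real.sin (2*π*(tw n q c j - tw n q c i)))|
          ≤ (1/(n*p)) * ∑ j, (2*π) * (|d j| + |d i|) := by
            apply mul_le_mul_of_nonneg_left hsum (by positivity)
        _ = (2*π/(n*p)) * S + (2*π/p) * |d i| := by
            have hsum2 : ∑ j : Fin n, (2*π) * (|d j| + |d i|)
                = (2*π) * S + (2*π) * n * |d i| := by
              rw [hS]
              simp only [mul_add, Finset.sum_add_distrib, Finset.sum_const, Finset.card_univ,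
                Fintype.card_fin, nsmul_eq_mul, ← Finset.mul_sum]
              ring
            rw [hsum2]
            have hnp : (n:ℝ)*p ≠ 0 := by positivity
            field_simp
    -- assemble norms
    have hft : f t = (sn⁻¹ : ℝ) • toE d := rfl
    have split0 : F t = (fun i => (F t i - B i) + B i) := by funext i; ring
    have split : toE (F t) = toE (fun i => F t i - B i) + toE B := by
      conv_lhs => rw [split0]
      exact toE_add _ _
    have hM : ‖toE (fun i => F t i - B i)‖
        ≤ ‖toE (fun i => (2*π/(n*p)) * S + (2*π/p) * |d i|)‖ := by
      apply norm_toE_mono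
      intro i
      have h1 := pt i
      exact h1
    have hdecomp : toE (fun i => (2*π/(n*p)) * S + (2*π/p) * |d i|)
        = toE (fun _ => (2*π/(n*p)) * S) + toE (fun i => (2*π/p) * |d i|) := by
      rw [← toE_add]
    have hconst : ‖toE (fun _ : Fin n => (2*π/(n*p)) * S)‖ = sn * ((2*π/(n*p)) * S) := by
      rw [toE_norm, Finset.sum_const, Finset.card_univ, Fintype.card_fin, nsmul_eq_mul]
      rw [Real.sqrt_mul hnR.le, Real.sqrt_sq (by positivity)]
    have habs : ‖toE (fun i => (2*π/p) * |d i|)‖ = (2*π/p) * ‖toE d‖ := by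
      rw [toE_norm, toE_norm]
      rw [show (∑ i, ((2*π/p) * |d i|)^2) = (2*π/p)^2 * ∑ i, (d i)^2 by
        rw [Finset.mul_sum]; refine Finset.sum_congr rfl fun i _ => by rw [mul_pow, sq_abs]]
      rw [Real.sqrt_mul (by positivity), Real.sqrt_sq (by positivity)]
    have hSb : S ≤ sn * ‖toE d‖ := by
      have h1 : S^2 ≤ (n:ℝ) * ∑ i, (d i)^2 := by
        have := sq_sum_le_card_mul_sum_sq (s := (Finset.univ : Finset (Fin n)))
          (f := fun i => |d i|)
        simpa [sq_abs, Finset.card_univ] using this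
      calc S = Real.sqrt (S^2) := (Real.sqrt_sq hS0).symm
        _ ≤ Real.sqrt ((n:ℝ) * ∑ i, (d i)^2) := Real.sqrt_le_sqrt h1
        _ = sn * ‖toE d‖ := by rw [Real.sqrt_mul hnR.le, toE_norm]
    have hmain : ‖toE (fun i => F t i - B i)‖ ≤ (4*π/p) * ‖toE d‖ := by
      calc ‖toE (fun i => F t i - B i)‖
          ≤ ‖toE (fun _ : Fin n => (2*π/(n*p)) * S) + toE (fun i => (2*π/p) * |d i|)‖ := by
            rw [← hdecomp]; exact hM
        _ ≤ sn * ((2*π/(n*p)) * S) + (2*π/p) * ‖toE d‖ := by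
            refine (norm_add_le _ _).trans ?_
            rw [hconst, habs]
        _ ≤ sn * ((2*π/(n*p)) * (sn * ‖toE d‖)) + (2*π/p) * ‖toE d‖ := by
            gcongr
        _ = (4*π/p) * ‖toE d‖ := by
            have : sn * ((2*π/(n*p)) * (sn * ‖toE d‖))
                = (sn * sn) * (2*π/(n*p)) * ‖toE d‖ := by ring
            rw [this, hsnsq]
            have hnp : (n:ℝ)*p ≠ 0 := by positivity
            field_simp
            ring
    have hBn : sn⁻¹ * ‖toE B‖ ≤ η := by
      rw [← norm2n_eq]
      exact hB
    calc ‖(sn⁻¹ : ℝ) • toE (F t)‖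
        = sn⁻¹ * ‖toE (F t)‖ := by
          rw [norm_smul, Real.norm_eq_abs, abs_inv, abs_of_pos hsn0]
      _ ≤ sn⁻¹ * (‖toE (fun i => F t i - B i)‖ + ‖toE B‖) := by
          gcongr
          rw [split]; exact norm_add_le _ _
      _ ≤ sn⁻¹ * ((4*π/p) * ‖toE d‖ + ‖toE B‖) := by gcongr
      _ = (4*π/p) * (sn⁻¹ * ‖toE d‖) + sn⁻¹ * ‖toE B‖ := by ring
      _ = (4*π/p) * ‖f t‖ + sn⁻¹ * ‖toE B‖ := by
          have hftn : ‖f t‖ = sn⁻¹ * ‖toE d‖ := by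
            rw [hft, norm_smul, Real.norm_eq_abs, abs_inv, abs_of_pos hsn0]
          rw [hftn]
      _ ≤ (4*π/p) * ‖f t‖ + η := by linarith [hBn]
  intro t ht
  have hres := norm_le_gronwallBound_of_norm_deriv_right_le (f := f)
    (f' := fun s => (sn⁻¹ : ℝ) • toE (F s)) (a := 0) (b := T) (δ := δ) (K := 4*π/p) (ε := η)
    (fun s _ => (hderiv s).continuousAt.continuousWithinAt)
    (fun s _ => (hderiv s).hasDerivWithinAt)
    (by rw [hnormf 0]; exact h0)
    (fun s _ => key s) t ht
  rw [hnormf t] at hres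
  simpa using hres

lemma gw_le (L T ε₁ : ℝ) (hL : 0 < L) (hT : 0 ≤ T) (hε : 0 < ε₁) (t : ℝ)
    (ht : t ∈ Set.Icc 0 T) :
    gronwallBound (ε₁/(2*Real.exp (L*T))) L (ε₁*L/(2*Real.exp (L*T))) t ≤ ε₁ := by
  rw [gronwallBound_of_K_ne_0 hL.ne']
  have hEb : 0 < Real.exp (L*T) := Real.exp_pos _
  have hX : Real.exp (L*t) ≤ Real.exp (L*T) := Real.exp_le_exp.2 (by nlinarith [ht.2, ht.1])
  have hX0 : 0 < Real.exp (L*t) := Real.exp_pos _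
  have hdiv : ε₁*L/(2*Real.exp (L*T))/L = ε₁/(2*Real.exp (L*T)) := by field_simp
  rw [hdiv]
  beta_reduce
  rw [div_mul_eq_mul_div, div_mul_eq_mul_div, ← add_div, div_le_iff₀ (by positivity)]
  nlinarith [mul_nonneg hε.le (sub_nonneg.2 hX)]

end TwistedAux

namespace TwistedProb

open Real TwistedAux

variable {Ω : Type*} [MeasurableSpace Ω] (ℙ : Measure Ω) [IsProbabilityMeasure ℙ]
    (p : ℝ) (hp : p ∈ Set.Ioo (0 : ℝ) 1)
    (a : (n : ℕ) → Fin n → Fin n → Ω → ℝ)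
    (hmeas : ∀ (n : ℕ) (i j : Fin n), Measurable (a n i j))
    (hsymm : ∀ (n : ℕ) (i j : Fin n) (ω : Ω), a n i j ω = a n j i ω)
    (hdiag : ∀ (n : ℕ) (i : Fin n) (ω : Ω), a n i i ω = 0)
    (h01 : ∀ (n : ℕ) (i j : Fin n) (ω : Ω), a n i j ω = 0 ∨ a n i j ω = 1)
    (hbern : ∀ (n : ℕ) (i j : Fin n), i < j → ℙ {ω | a n i j ω = 1} = ENNReal.ofReal p)
    (hind : ∀ n : ℕ, ProbabilityTheory.iIndepFun
      (fun e : {e : Fin n × Fin n // e.1 < e.2} => a n e.1.1 e.1.2) ℙ)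

include h01 hmeas in
lemma a_int (n : ℕ) (i j : Fin n) : Integrable (a n i j) ℙ := by
  refine Integrable.mono' (integrable_const (1:ℝ)) (hmeas n i j).aestronglyMeasurable ?_
  filter_upwards with ω
  rcases h01 n i j ω with h | h <;> simp [h]

include h01 hmeas in
lemma aa_int (n : ℕ) (i j k : Fin n) :
    Integrable (fun ω => a n i j ω * a n i k ω) ℙ := by
  refine Integrable.mono' (integrable_const (1:ℝ))
    (((hmeas n i j).mul (hmeas n i k)).aestronglyMeasurable) ?_
  filter_upwards with ω
  rcases h01 n i j ω with h | h <;> rcases h01 n i k ω with h' | h' <;> simp [h, h']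

include hp hmeas hsymm hdiag h01 hbern in
lemma exp_a (n : ℕ) (i j : Fin n) :
    ∫ ω, a n i j ω ∂ℙ = if j = i then 0 else p := by
  rcases eq_or_ne j i with rfl | hij
  · simp [hdiag n j]
  · rw [if_neg hij]
    set S : Set Ω := {ω | a n i j ω = 1} with hS
    have hSm : MeasurableSet S := by
      have : S = (a n i j) ⁻¹' {1} := rfl
      rw [this]; exact (hmeas n i j) (measurableSet_singleton 1)
    have hPS : ℙ S = ENNReal.ofReal p := by
      rcases lt_or_gt_of_ne (Ne.symm hij) with h | h
      · exact hbern n i j h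
      · have : S = {ω | a n j i ω = 1} := by
          ext ω; simp only [hS, Set.mem_setOf_eq, hsymm n i j ω]
        rw [this]; exact hbern n j i h
    have ha_eq : a n i j = S.indicator (fun _ => (1:ℝ)) := by
      funext ω
      rcases h01 n i j ω with h | h
      · have hω : ω ∉ S := fun hω => by
          rw [hS] at hω; rw [(hω : a n i j ω = 1)] at h; norm_num at h
        rw [Set.indicator_of_notMem hω, h]
      · have hω : ω ∈ S := h
        rw [Set.indicator_of_mem hω, h]
    rw [ha_eq, integral_indicator_const _ hSm, measureReal_def, hPS, smul_eq_mul, mul_one,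
      ENNReal.toReal_ofReal hp.1.le]

include hp hmeas hsymm hdiag h01 hbern hind in
lemma prod_a (n : ℕ) (i j k : Fin n) :
    ∫ ω, a n i j ω * a n i k ω ∂ℙ
      = if k = j then (if j = i then 0 else p)
        else (if j = i then 0 else p) * (if k = i then 0 else p) := by
  rcases eq_or_ne k j with rfl | hkj
  · rw [if_pos rfl]
    have : (fun ω => a n i k ω * a n i k ω) = a n i k := by
      funext ω; rcases h01 n i k ω with h | h <;> rw [h] <;> norm_num
    rw [this, exp_a ℙ p hp a hmeas hsymm hdiag h01 hbern]
  · rw [if_neg hkj]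
    rcases eq_or_ne j i with rfl | hji
    · simp [hdiag n j]
    rcases eq_or_ne k i with rfl | hki
    · simp [hdiag n k]
    -- independence case
    have key : ProbabilityTheory.IndepFun (a n i j) (a n i k) ℙ := by
      have hsk : a n k i = a n i k := funext fun ω => hsymm n k i ω
      have hsj : a n j i = a n i j := funext fun ω => hsymm n j i ω
      rcases (Ne.symm hji).lt_or_gt with h1 | h1 <;> rcases (Ne.symm hki).lt_or_gt with h2 | h2
      · have hne : (⟨(i,j),h1⟩ : {e : Fin n × Fin n // e.1 < e.2}) ≠ ⟨(i,k),h2⟩ := by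
          intro hE; rw [Subtype.mk.injEq, Prod.mk.injEq] at hE; exact hkj hE.2.symm
        exact (hind n).indepFun hne
      · have hne : (⟨(i,j),h1⟩ : {e : Fin n × Fin n // e.1 < e.2}) ≠ ⟨(k,i),h2⟩ := by
          intro hE; rw [Subtype.mk.injEq, Prod.mk.injEq] at hE; exact Ne.symm hki hE.1
        have h' : ProbabilityTheory.IndepFun (a n i j) (a n k i) ℙ := (hind n).indepFun hne
        rwa [hsk] at h'
      · have hne : (⟨(j,i),h1⟩ : {e : Fin n × Fin n // e.1 < e.2}) ≠ ⟨(i,k),h2⟩ := by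
          intro hE; rw [Subtype.mk.injEq, Prod.mk.injEq] at hE; exact hji hE.1
        have h' : ProbabilityTheory.IndepFun (a n j i) (a n i k) ℙ := (hind n).indepFun hne
        rwa [hsj] at h'
      · have hne : (⟨(j,i),h1⟩ : {e : Fin n × Fin n // e.1 < e.2}) ≠ ⟨(k,i),h2⟩ := by
          intro hE; rw [Subtype.mk.injEq, Prod.mk.injEq] at hE; exact hkj hE.1.symm
        have h' : ProbabilityTheory.IndepFun (a n j i) (a n k i) ℙ := (hind n).indepFun hne
        rwa [hsj, hsk] at h'
    have := key.integral_mul_eq_mul_integral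
      (a_int ℙ a hmeas h01 n i j).aestronglyMeasurable (a_int ℙ a hmeas h01 n i k).aestronglyMeasurable
    rw [show (fun ω => a n i j ω * a n i k ω) = a n i j * a n i k from rfl, this,
      exp_a ℙ p hp a hmeas hsymm hdiag h01 hbern n i j,
      exp_a ℙ p hp a hmeas hsymm hdiag h01 hbern n i k, if_neg hji, if_neg hki]

include hp hmeas hsymm hdiag h01 hbern hind in
lemma moment (n : ℕ) (i : Fin n) (s : Fin n → ℝ) (hs1 : ∀ j, |s j| ≤ 1) (hsi : s i = 0)
    (hsum : ∑ j, s j = 0) :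
    ∫ ω, (∑ j, a n i j ω * s j)^2 ∂ℙ ≤ n * p := by
  set m : Fin n → ℝ := fun j => if j = i then 0 else p with hm
  have expand : ∀ ω, (∑ j, a n i j ω * s j)^2
      = ∑ j, ∑ k, (s j * s k) * (a n i j ω * a n i k ω) := by
    intro ω
    rw [sq, Finset.sum_mul_sum]
    exact Finset.sum_congr rfl fun j _ => Finset.sum_congr rfl fun k _ => by ring
  have step1 : ∫ ω, (∑ j, a n i j ω * s j)^2 ∂ℙ
      = ∑ j, ∑ k, (s j * s k) * ∫ ω, a n i j ω * a n i k ω ∂ℙ := by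
    simp_rw [expand]
    rw [integral_finset_sum _ (fun j _ => integrable_finset_sum _
      (fun k _ => ((aa_int ℙ a hmeas h01 n i j k).const_mul _)))]
    refine Finset.sum_congr rfl fun j _ => ?_
    rw [integral_finset_sum _ (fun k _ => ((aa_int ℙ a hmeas h01 n i j k).const_mul _))]
    exact Finset.sum_congr rfl fun k _ => integral_const_mul _ _
  have step2 : ∑ j, ∑ k, (s j * s k) * (∫ ω, a n i j ω * a n i k ω ∂ℙ)
      = ∑ j, ∑ k, (s j * s k) * (m j * m k + if k = j then m j - (m j)^2 else 0) := by
    refine Finset.sum_congr rfl fun j _ => Finset.sum_congr rfl fun k _ => ?_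
    rw [prod_a ℙ p hp a hmeas hsymm hdiag h01 hbern hind n i j k]
    rcases eq_or_ne k j with rfl | hkj
    · rw [if_pos rfl, if_pos rfl, hm]
      simp only
      split_ifs <;> ring
    · rw [if_neg hkj, if_neg hkj]
      ring
  have step3 : ∑ j, ∑ k, (s j * s k) * (m j * m k + if k = j then m j - (m j)^2 else 0)
      = (∑ j, s j * m j)^2 + ∑ j, (s j)^2 * (m j - (m j)^2) := by
    simp only [mul_add, Finset.sum_add_distrib]
    congr 1
    · rw [sq, Finset.sum_mul_sum]
      exact Finset.sum_congr rfl fun j _ => Finset.sum_congr rfl fun k _ => by ring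
    · refine Finset.sum_congr rfl fun j _ => ?_
      simp only [mul_ite, mul_zero]
      rw [Finset.sum_ite_eq' Finset.univ j (fun x => s j * s x * (m j - (m j)^2))]
      rw [if_pos (Finset.mem_univ j)]
      ring
  have h1 : ∑ j, s j * m j = 0 := by
    have : ∀ j : Fin n, s j * m j = p * s j := by
      intro j
      rw [hm]; simp only
      split_ifs with h
      · rw [h, hsi]; ring
      · ring
    simp_rw [this]
    rw [← Finset.mul_sum, hsum, mul_zero]
  rw [step1, step2, step3, h1]
  have hbound : ∀ j : Fin n, (s j)^2 * (m j - (m j)^2) ≤ p := by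
    intro j
    have hsq : (s j)^2 ≤ 1 := by
      rw [← sq_abs]; nlinarith [hs1 j, abs_nonneg (s j)]
    have : 0 ≤ m j ∧ m j ≤ p := by
      rw [hm]; simp only; split_ifs
      · exact ⟨le_refl 0 |>.trans (le_refl 0), hp.1.le⟩
      · exact ⟨hp.1.le, le_refl p⟩
    have h2 : 0 ≤ m j - (m j)^2 := by nlinarith [this.1, this.2, hp.2]
    have h3 : m j - (m j)^2 ≤ p := by nlinarith [this.1, this.2]
    nlinarith [sq_nonneg (s j)]
  calc (0:ℝ)^2 + ∑ j, (s j)^2 * (m j - (m j)^2) ≤ 0 + ∑ j : Fin n, p := by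
        gcongr with j hj
        · norm_num
        · exact hbound j
    _ = n * p := by rw [Finset.sum_const, Finset.card_univ, Fintype.card_fin, nsmul_eq_mul]; ring

end TwistedProb

open Real TwistedAux TwistedProb in
/-- Theorem 7.4, metastability of twisted states: for the Kuramoto model
on the Erdős–Rényi graph `G(n,p)`, for all `ε₁, ε₂ ∈ (0,1)`, `T > 0` and integer `q ≥ 1`
there is `N = N(ε₁,ε₂)` such that for all `n ≥ N` there is `δ = δ(n,ε₂) > 0` with:
if `‖u_n(0) - u_n^{(q)}‖_{2,n} < δ` then
`P{ max_{t∈[0,T]} ‖u_n(t) - u_n^{(q)}‖_{2,n} > ε₁ } < ε₂`. -/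
theorem twisted_states_metastable_on_ER
    {Ω : Type*} [MeasurableSpace Ω] (ℙ : Measure Ω) [IsProbabilityMeasure ℙ]
    (p : ℝ) (hp : p ∈ Set.Ioo (0 : ℝ) 1)
    (α : ℕ) (hα : α = 0 ∨ α = 1)
    -- the adjacency matrices of G(n,p)
    (a : (n : ℕ) → Fin n → Fin n → Ω → ℝ)
    (hmeas : ∀ (n : ℕ) (i j : Fin n), Measurable (a n i j))
    (hsymm : ∀ (n : ℕ) (i j : Fin n) (ω : Ω), a n i j ω = a n j i ω)
    (hdiag : ∀ (n : ℕ) (i : Fin n) (ω : Ω), a n i i ω = 0)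
    (h01 : ∀ (n : ℕ) (i j : Fin n) (ω : Ω), a n i j ω = 0 ∨ a n i j ω = 1)
    (hbern : ∀ (n : ℕ) (i j : Fin n), i < j → ℙ {ω | a n i j ω = 1} = ENNReal.ofReal p)
    (hind : ∀ n : ℕ, ProbabilityTheory.iIndepFun
      (fun e : {e : Fin n × Fin n // e.1 < e.2} => a n e.1.1 e.1.2) ℙ) :
    ∀ ε₁ ∈ Set.Ioo (0 : ℝ) 1, ∀ ε₂ ∈ Set.Ioo (0 : ℝ) 1, ∀ T : ℝ, 0 < T →
    ∀ q : ℕ, 1 ≤ q → ∀ c : ℝ,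
    ∃ N : ℕ, ∀ n : ℕ, N ≤ n → ∃ δ > (0 : ℝ),
      ∀ u0 : Fin n → ℝ,
        norm2n n (fun x => u0 x - (((q * (x : ℕ) : ℕ) : ℝ) / n + c)) < δ →
        ∀ u : Ω → ℝ → Fin n → ℝ,
          (∀ ω : Ω, u ω 0 = u0) →
          (∀ (ω : Ω) (t : ℝ) (i : Fin n), HasDerivAt (fun s => u ω s i)
            (((-1 : ℝ) ^ α / ((n : ℝ) * p)) *
              ∑ j : Fin n, a n i j ω * Real.sin (2 * Real.pi * (u ω t j - u ω t i))) t) →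
          ℙ {ω | ∃ t ∈ Set.Icc (0 : ℝ) T,
              ε₁ < norm2n n (fun x => u ω t x - (((q * (x : ℕ) : ℕ) : ℝ) / n + c))}
            < ENNReal.ofReal ε₂ := by
  intro ε₁ hε₁ ε₂ hε₂ T hT q hq c
  obtain ⟨hp0, hp1⟩ := hp
  have hε10 : 0 < ε₁ := hε₁.1
  have hε20 : 0 < ε₂ := hε₂.1
  set L : ℝ := 4*π/p with hLdef
  have hL0 : 0 < L := by rw [hLdef]; positivity
  have hEb : (0:ℝ) < Real.exp (L*T) := Real.exp_pos _
  set δ : ℝ := ε₁/(2*Real.exp (L*T)) with hδdef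
  set η : ℝ := ε₁*L/(2*Real.exp (L*T)) with hηdef
  have hδ0 : 0 < δ := by rw [hδdef]; positivity
  have hη0 : 0 < η := by rw [hηdef]; positivity
  refine ⟨max 1 (Nat.ceil (1/(p*η^2*ε₂)) + 1), fun n hn => ?_⟩
  have hn1 : 1 ≤ n := le_trans (le_max_left _ _) hn
  have hnpos : 0 < n := hn1
  have hnR : (0:ℝ) < n := by exact_mod_cast hnpos
  have hbig : 1/((n:ℝ)*p*η^2) < ε₂ := by
    have h1 : (1/(p*η^2*ε₂) : ℝ) < n := by
      calc (1/(p*η^2*ε₂) : ℝ) ≤ (Nat.ceil (1/(p*η^2*ε₂)) : ℝ) := Nat.le_ceil _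
        _ < ((Nat.ceil (1/(p*η^2*ε₂)) + 1 : ℕ) : ℝ) := by exact_mod_cast Nat.lt_succ_self _
        _ ≤ (n:ℝ) := by exact_mod_cast le_trans (le_max_right _ _) hn
    rw [div_lt_iff₀ (by positivity)] at h1 ⊢
    nlinarith [hε₂.1, hη0, hp0, sq_nonneg η]
  refine ⟨δ, hδ0, fun u0 hu0 u hu0eq hode => ?_⟩
  -- notation
  set s : Fin n → Fin n → ℝ :=
    fun i j => Real.sin (2*π*(tw n q c j - tw n q c i)) with hs
  set κ : ℝ := ((-1:ℝ)^α/((n:ℝ)*p)) with hκ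
  have hκ2 : κ^2 = 1/((n:ℝ)*p)^2 := by
    rw [hκ, div_pow]
    congr 1
    rw [← pow_mul, mul_comm α 2, pow_mul]
    norm_num
  set X : Fin n → Ω → ℝ := fun i ω => ∑ j, a n i j ω * s i j with hX
  set G : Ω → ℝ := fun ω => (n:ℝ)⁻¹ * ∑ i, (κ * X i ω)^2 with hG
  -- properties of s
  have hs1 : ∀ i j, |s i j| ≤ 1 := fun i j =>
    abs_le.2 ⟨Real.neg_one_le_sin _, Real.sin_le_one _⟩
  have hsi : ∀ i, s i i = 0 := by
    intro i; rw [hs]; simp only [sub_self, mul_zero, Real.sin_zero]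
  have hsum : ∀ i, ∑ j, s i j = 0 := by
    intro i
    calc ∑ j, s i j
        = ∑ j : Fin n, Real.sin (2*π*q*((((j:ℕ):ℤ) - ((i:ℕ):ℤ) : ℤ) : ℝ)/n) := by
          refine Finset.sum_congr rfl fun j _ => ?_
          rw [hs]
          simp only
          rw [tw_arg n q hnpos c i j]
      _ = 0 := sum_sin_zero n q hnpos i
  -- integrability and moment bound for G
  have hXm : ∀ i, Measurable (X i) := by
    intro i
    exact Finset.measurable_sum _ (fun j _ => (hmeas n i j).mul_const _)
  have hXbd : ∀ i ω, |X i ω| ≤ (n:ℝ) := by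
    intro i ω
    rw [hX]
    simp only
    refine (Finset.abs_sum_le_sum_abs _ _).trans ?_
    calc ∑ j, |a n i j ω * s i j| ≤ ∑ j : Fin n, 1 := by
          refine Finset.sum_le_sum fun j _ => ?_
          rw [abs_mul]
          have ha : |a n i j ω| ≤ 1 := by
            rcases h01 n i j ω with h | h <;> rw [h] <;> norm_num
          calc |a n i j ω| * |s i j| ≤ 1 * 1 :=
              mul_le_mul ha (hs1 i j) (abs_nonneg _) zero_le_one
            _ = 1 := by norm_num
      _ = (n:ℝ) := by
          rw [Finset.sum_const, Finset.card_univ, Fintype.card_fin, nsmul_eq_mul, mul_one]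
  have hXint2 : ∀ i, Integrable (fun ω => (κ * X i ω)^2) ℙ := by
    intro i
    refine Integrable.mono' (integrable_const (κ^2 * (n:ℝ)^2))
      ((((hXm i).const_mul κ).pow_const 2).aestronglyMeasurable) ?_
    filter_upwards with ω
    rw [Real.norm_eq_abs, abs_of_nonneg (sq_nonneg _), mul_pow]
    have := hXbd i ω
    have h2 : (X i ω)^2 ≤ (n:ℝ)^2 := by
      rw [← sq_abs]; nlinarith [abs_nonneg (X i ω)]
    nlinarith [sq_nonneg κ]
  have hGint : Integrable G ℙ := by
    rw [hG]
    exact (integrable_finset_sum _ (fun i _ => hXint2 i)).const_mul _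
  have hGnn : ∀ ω, 0 ≤ G ω := by
    intro ω
    rw [hG]
    exact mul_nonneg (by positivity) (Finset.sum_nonneg fun i _ => sq_nonneg _)
  have hintG : ∫ ω, G ω ∂ℙ ≤ 1/((n:ℝ)*p) := by
    rw [hG]
    simp only
    rw [integral_const_mul, integral_finset_sum _ (fun i _ => hXint2 i)]
    have hmom : ∀ i : Fin n, ∫ ω, (κ * X i ω)^2 ∂ℙ ≤ κ^2 * ((n:ℝ) * p) := by
      intro i
      have heq : ∀ ω, (κ * X i ω)^2 = κ^2 * (X i ω)^2 := fun ω => by ring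
      simp_rw [heq]
      rw [integral_const_mul]
      have := moment ℙ p ⟨hp0, hp1⟩ a hmeas hsymm hdiag h01 hbern hind n i (s i)
        (hs1 i) (hsi i) (hsum i)
      have hκsq : 0 ≤ κ^2 := sq_nonneg _
      calc κ^2 * ∫ ω, (X i ω)^2 ∂ℙ ≤ κ^2 * ((n:ℝ)*p) := by
            apply mul_le_mul_of_nonneg_left _ hκsq
            exact this
        _ = κ^2 * ((n:ℝ)*p) := rfl
    calc (n:ℝ)⁻¹ * ∑ i, ∫ ω, (κ * X i ω)^2 ∂ℙ
        ≤ (n:ℝ)⁻¹ * ∑ i : Fin n, κ^2 * ((n:ℝ)*p) := by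
          apply mul_le_mul_of_nonneg_left _ (by positivity)
          exact Finset.sum_le_sum fun i _ => hmom i
      _ = 1/((n:ℝ)*p) := by
          rw [Finset.sum_const, Finset.card_univ, Fintype.card_fin, nsmul_eq_mul, hκ2]
          have hnp : (n:ℝ)*p ≠ 0 := by positivity
          field_simp
  -- inclusion of the bad event
  have hsub : {ω | ∃ t ∈ Set.Icc (0:ℝ) T,
        ε₁ < norm2n n (fun x => u ω t x - (((q * (x : ℕ) : ℕ) : ℝ) / n + c))}
      ⊆ {ω | η^2 ≤ G ω} := by
    intro ω hω
    by_contra hE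
    rw [Set.mem_setOf_eq, not_le] at hE
    obtain ⟨t, ht, hgt⟩ := hω
    -- the drift at the twisted state is small
    have hBη : norm2n n (fun i => κ * ∑ j, (a n i j ω) * s i j) ≤ η := by
      have hGrw : norm2n n (fun i => κ * ∑ j, (a n i j ω) * s i j) = Real.sqrt (G ω) := rfl
      rw [hGrw]
      calc Real.sqrt (G ω) ≤ Real.sqrt (η^2) := Real.sqrt_le_sqrt hE.le
        _ = η := Real.sqrt_sq hη0.le
    have hA0 : ∀ i j, 0 ≤ (a n i j ω) := by
      intro i j; rcases h01 n i j ω with h | h <;> rw [h] <;> norm_num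
    have hA1 : ∀ i j, (a n i j ω) ≤ 1 := by
      intro i j; rcases h01 n i j ω with h | h <;> rw [h] <;> norm_num
    have hinit : norm2n n (fun x => u ω 0 x - tw n q c x) ≤ δ := by
      rw [show u ω 0 = u0 from hu0eq ω]
      exact le_of_lt hu0
    have hdet := gronwall_det n q hnpos p c T δ η hp0 hT.le hδ0.le hη0.le α
      (fun i j => a n i j ω) hA0 hA1 (u ω) (fun t i => hode ω t i) hBη hinit t ht
    have hgw := gw_le L T ε₁ hL0 hT.le hε₁.1 t ht
    rw [hLdef] at hgw
    have hfinal : norm2n n (fun x => u ω t x - tw n q c x) ≤ ε₁ := le_trans hdet hgw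
    exact absurd hgt (not_lt.2 hfinal)
  -- Markov / Chebyshev
  have hmar := mul_meas_ge_le_integral_of_nonneg
    (ae_of_all ℙ hGnn) hGint (η^2)
  have htoReal : (ℙ {ω | η^2 ≤ G ω}).toReal < ε₂ := by
    have h2 : η^2 * (ℙ {ω | η^2 ≤ G ω}).toReal ≤ 1/((n:ℝ)*p) := le_trans hmar hintG
    have h3 : (ℙ {ω | η^2 ≤ G ω}).toReal ≤ 1/((n:ℝ)*p*η^2) := by
      rw [le_div_iff₀ (by positivity)]
      calc (ℙ {ω | η^2 ≤ G ω}).toReal * ((n:ℝ)*p*η^2)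
          = ((n:ℝ)*p) * (η^2 * (ℙ {ω | η^2 ≤ G ω}).toReal) := by ring
        _ ≤ ((n:ℝ)*p) * (1/((n:ℝ)*p)) := by
            apply mul_le_mul_of_nonneg_left h2 (by positivity)
        _ = 1 := by field_simp
    exact lt_of_le_of_lt h3 hbig
  calc ℙ {ω | ∃ t ∈ Set.Icc (0:ℝ) T,
        ε₁ < norm2n n (fun x => u ω t x - (((q * (x : ℕ) : ℕ) : ℝ) / n + c))}
      ≤ ℙ {ω | η^2 ≤ G ω} := measure_mono hsub
    _ = ENNReal.ofReal ((ℙ {ω | η^2 ≤ G ω}).toReal) :=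
        (ENNReal.ofReal_toReal (measure_ne_top _ _)).symm
    _ < ENNReal.ofReal ε₂ := by
        rw [ENNReal.ofReal_lt_ofReal_iff hε₂.1]
        exact htoReal
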